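/- For any antichain S in F_{2k}^{[1,n]} and any i ≥ 1: S([i+1, i+2]) ≤_p S([i, i+1]), and (S − 1_{2k})([i, i+1]) = S([i+1, i+2]) − 1_{2k-2}. -/

import Mathlib

/-- `F ≤_p G`: componentwise comparison of the increasing enumerations. -/
def lep (F G : Finset ℕ) : Prop :=
  F.card = G.card ∧ ∀ ℓ, (F.sort (· ≤ ·)).getD ℓ 0 ≤ (G.sort (· ≤ ·)).getD ℓ 0

/-- `F ≺_p G`: `F ≤_p G - 1` componentwise on increasing enumerations. -/
def prep (F G : Finset ℕ) : Prop :=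
  F.card = G.card ∧ ∀ ℓ < F.card,
    (F.sort (· ≤ ·)).getD ℓ 0 + 1 ≤ (G.sort (· ≤ ·)).getD ℓ 0

/-- The poset `F_{2k}^{[1,n]}`: `2k`-subsets of `[n]` that are disjoint unions
of `k` adjacent pairs `{y_j, y_j + 1}` with gaps `≥ 2`. -/
def FF (k n : ℕ) : Set (Finset ℕ) :=
  {F | ∃ y : ℕ → ℕ, (1 ≤ y 1) ∧ (∀ j, 1 ≤ j → j ≤ k → y j + 1 ≤ n) ∧
    (∀ j, 1 ≤ j → j < k → y j + 2 ≤ y (j + 1)) ∧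
    F = (Finset.Icc 1 k).biUnion (fun j => {y j, y j + 1})}

/-- The order ideal of `F_{2k}^{[1,n]}` generated by `S`. -/
def idealOf (k n : ℕ) (S : Set (Finset ℕ)) : Set (Finset ℕ) :=
  {G | G ∈ FF k n ∧ ∃ F ∈ S, lep G F}

/-- `S` is an antichain in `F_{2k}^{[1,n]}`. -/
def IsAC (k n : ℕ) (S : Set (Finset ℕ)) : Prop :=
  S ⊆ FF k n ∧ ∀ F ∈ S, ∀ G ∈ S, lep F G → F = G

/-- The candidates defining `S(J)` for the interval `J = [j, j+2l-1]`:
sets `H ⊆ [j+2l, n]` with `J ∪ H ∈ F(S)`. -/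
def SJcand (k n : ℕ) (S : Set (Finset ℕ)) (j l : ℕ) : Set (Finset ℕ) :=
  {H | (∀ a ∈ H, j + 2 * l ≤ a ∧ a ≤ n) ∧
    (Finset.Icc j (j + 2 * l - 1) ∪ H) ∈ idealOf k n S}

/-- `S(J)`, `J = [j, j+2l-1]`: the maximal elements of `SJcand`. -/
def SJ (k n : ℕ) (S : Set (Finset ℕ)) (j l : ℕ) : Set (Finset ℕ) :=
  {H | H ∈ SJcand k n S j l ∧ ∀ H' ∈ SJcand k n S j l, lep H H' → H = H'}

/-- `T ≤_p S` for antichains: every element of `T` is `≤_p` some element of `S`. -/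
def ACle (T S : Set (Finset ℕ)) : Prop := ∀ G ∈ T, ∃ F ∈ S, lep G F

/-- `T ≺_p S` for antichains: every element of `T` is `≺_p` some element of `S`. -/
def ACprec (T S : Set (Finset ℕ)) : Prop := ∀ G ∈ T, ∃ F ∈ S, prep G F

/-- `S - 1`: subtract the all-ones vector from each element of `S` with
minimum `> 1`. -/
def sub1 (S : Set (Finset ℕ)) : Set (Finset ℕ) :=
  {G | ∃ F ∈ S, (∀ a ∈ F, 2 ≤ a) ∧ G = F.image (fun a => a - 1)}

/-- The facets of `B(S, i)`: elements of the order ideal `F(S)` whose minimum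
is at least `i`. -/
def Bfacets (k n : ℕ) (S : Set (Finset ℕ)) (i : ℕ) : Set (Finset ℕ) :=
  {G | G ∈ idealOf k n S ∧ ∀ a ∈ G, i ≤ a}

lemma lep_refl (F : Finset ℕ) : lep F F := ⟨rfl, fun _ => le_refl _⟩

lemma lep_trans {F G H : Finset ℕ} (h1 : lep F G) (h2 : lep G H) : lep F H :=
  ⟨h1.1.trans h2.1, fun ℓ => (h1.2 ℓ).trans (h2.2 ℓ)⟩

lemma sort_getD_mem {F : Finset ℕ} {ℓ : ℕ} (h : ℓ < F.card) :
    (F.sort (· ≤ ·)).getD ℓ 0 ∈ F := by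
  rw [← Finset.length_sort (· ≤ ·)] at h
  rw [List.getD_eq_getElem _ _ h]
  exact Finset.mem_sort (· ≤ ·) |>.mp (List.getElem_mem h)

lemma mem_eq_getD {F : Finset ℕ} {a : ℕ} (h : a ∈ F) :
    ∃ ℓ < F.card, (F.sort (· ≤ ·)).getD ℓ 0 = a := by
  have h' : a ∈ F.sort (· ≤ ·) := (Finset.mem_sort _).mpr h
  obtain ⟨ℓ, hℓ, he⟩ := List.mem_iff_getElem.mp h'
  exact ⟨ℓ, by simpa using hℓ, by rw [List.getD_eq_getElem _ _ hℓ]; exact he⟩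

lemma getD_zero_le {F : Finset ℕ} {a : ℕ} (h : a ∈ F) :
    (F.sort (· ≤ ·)).getD 0 0 ≤ a := by
  obtain ⟨ℓ, hℓ, he⟩ := mem_eq_getD h
  subst he
  have hs := Finset.pairwise_sort (s := F) (r := (· ≤ ·))
  have h0 : 0 < F.card := Nat.pos_of_ne_zero (by omega)
  rcases Nat.eq_zero_or_pos ℓ with rfl | hp
  · exact le_refl _
  · have hl0 : 0 < (F.sort (· ≤ ·)).length := by simpa using h0
    have hll : ℓ < (F.sort (· ≤ ·)).length := by simpa using hℓ
    rw [List.getD_eq_getElem _ _ hl0, List.getD_eq_getElem _ _ hll]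
    exact List.Pairwise.rel_get_of_lt hs (by simpa using hp)

lemma pair_union_eq {j : ℕ} {H : Finset ℕ} :
    Finset.Icc j (j+1) ∪ H = insert j (insert (j+1) H) := by
  ext a
  by_cases hA : a ∈ H <;> simp [Finset.mem_Icc, hA] <;> omega

lemma sort_pair_union {j : ℕ} {H : Finset ℕ} (hH : ∀ a ∈ H, j + 2 ≤ a) :
    (Finset.Icc j (j+1) ∪ H).sort (· ≤ ·) = j :: (j+1) :: H.sort (· ≤ ·) := by
  rw [pair_union_eq]
  have e2 : Finset.sort (insert (j+1) H) (· ≤ ·) = (j+1) :: H.sort (· ≤ ·) := by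
    apply Finset.sort_insert
    · intro b hb; have := hH b hb; omega
    · intro hb; have := hH _ hb; omega
  have e1 : Finset.sort (insert j (insert (j+1) H)) (· ≤ ·) =
      j :: Finset.sort (insert (j+1) H) (· ≤ ·) := by
    apply Finset.sort_insert
    · intro b hb
      rcases Finset.mem_insert.mp hb with rfl | hb
      · omega
      · have := hH b hb; omega
    · intro hb
      rcases Finset.mem_insert.mp hb with h | hb
      · omega
      · have := hH _ hb; omega
  rw [e1, e2]

lemma sort_image {F : Finset ℕ} {f : ℕ → ℕ} (hmono : Monotone f)
    (hinj : Set.InjOn f F) :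
    (F.image f).sort (· ≤ ·) = (F.sort (· ≤ ·)).map f := by
  apply List.Perm.eq_of_pairwise' (Finset.pairwise_sort _ _)
  · exact List.Pairwise.map f (fun a b hab => hmono hab) (Finset.pairwise_sort (s := F) (r := (· ≤ ·)))
  · rw [← Multiset.coe_eq_coe, Finset.sort_eq, ← Multiset.map_coe, Finset.sort_eq]
    exact Finset.image_val_of_injOn hinj

lemma lep_image {F G : Finset ℕ} {f : ℕ → ℕ} (hmono : Monotone f)
    (hinjF : Set.InjOn f F) (hinjG : Set.InjOn f G) (h : lep F G) :
    lep (F.image f) (G.image f) := by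
  have hc : (F.image f).card = (G.image f).card := by
    rw [Finset.card_image_of_injOn hinjF, Finset.card_image_of_injOn hinjG, h.1]
  refine ⟨hc, fun ℓ => ?_⟩
  rw [sort_image hmono hinjF, sort_image hmono hinjG]
  by_cases hl : ℓ < F.card
  · have h1 : ℓ < (F.sort (· ≤ ·)).length := by simpa using hl
    have h2 : ℓ < (G.sort (· ≤ ·)).length := by simpa using h.1 ▸ hl
    rw [List.getD_eq_getElem _ _ (by simpa using h1), List.getD_eq_getElem _ _ (by simpa using h2)]
    simp only [List.getElem_map]
    apply hmono
    have := h.2 ℓ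
    rwa [List.getD_eq_getElem _ _ h1, List.getD_eq_getElem _ _ h2] at this
  · rw [List.getD_eq_default, List.getD_eq_default]
    · simp [h.1] at hl ⊢; omega
    · simp at hl ⊢; omega

lemma image_sub_add {F : Finset ℕ} (h : ∀ a ∈ F, 1 ≤ a) :
    (F.image (· - 1)).image (· + 1) = F := by
  rw [Finset.image_image]
  rw [show F = F.image id from (Finset.image_id).symm]
  rw [Finset.image_image]
  apply Finset.image_congr
  intro a ha
  have := h a ha
  simp; omega

lemma list_sum_getD (l : List ℕ) : l.sum = ∑ ℓ ∈ Finset.range l.length, l.getD ℓ 0 := by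
  induction l with
  | nil => simp
  | cons a t ih => simp [Finset.sum_range_succ', ih]; omega

lemma finset_sum_sort (F : Finset ℕ) :
    (∑ a ∈ F, a) = ∑ ℓ ∈ Finset.range F.card, (F.sort (· ≤ ·)).getD ℓ 0 := by
  have h1 : (∑ a ∈ F, a) = (F.sort (· ≤ ·)).sum := by
    rw [← Multiset.sum_coe, Finset.sort_eq]
    rw [Finset.sum_eq_multiset_sum, Multiset.map_id']
  rw [h1, list_sum_getD]
  simp

lemma lep_sum_le {F G : Finset ℕ} (h : lep F G) : (∑ a ∈ F, a) ≤ ∑ a ∈ G, a := by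
  rw [finset_sum_sort, finset_sum_sort, ← h.1]
  exact Finset.sum_le_sum (fun ℓ _ => h.2 ℓ)

lemma eq_of_lep_of_sum {F G : Finset ℕ} (h : lep F G)
    (hs : (∑ a ∈ F, a) = ∑ a ∈ G, a) : F = G := by
  have hgetD : ∀ ℓ ∈ Finset.range F.card,
      (F.sort (· ≤ ·)).getD ℓ 0 = (G.sort (· ≤ ·)).getD ℓ 0 := by
    rw [finset_sum_sort, finset_sum_sort, ← h.1] at hs
    exact (Finset.sum_eq_sum_iff_of_le (fun ℓ _ => h.2 ℓ)).mp hs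
  have hlist : F.sort (· ≤ ·) = G.sort (· ≤ ·) := by
    apply List.ext_getElem (by simp [h.1])
    intro ℓ h1 h2
    have := hgetD ℓ (by simpa using h1)
    rwa [List.getD_eq_getElem _ _ h1, List.getD_eq_getElem _ _ h2] at this
  ext a
  rw [← Finset.mem_sort (· ≤ ·), ← Finset.mem_sort (· ≤ ·), hlist]

lemma exists_lep_max {𝒞 : Set (Finset ℕ)} {n : ℕ}
    (hbd : ∀ H ∈ 𝒞, ∀ a ∈ H, a ≤ n) {H : Finset ℕ} (hH : H ∈ 𝒞) :
    ∃ H', (H' ∈ 𝒞 ∧ ∀ H'' ∈ 𝒞, lep H' H'' → H' = H'') ∧ lep H H' := by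
  set D : Set (Finset ℕ) := {H' ∈ 𝒞 | lep H H'} with hD
  have hfin : D.Finite := by
    apply Set.Finite.subset (Finset.finite_toSet (Finset.Icc 0 n).powerset)
    intro X hX
    simp only [Finset.coe_powerset, Set.mem_preimage, Set.mem_powerset_iff] at *
    intro a ha
    simp [Finset.mem_Icc]
    exact hbd X hX.1 a ha
  obtain ⟨H', hH', hmax⟩ := Set.Finite.exists_maximalFor (fun X => ∑ a ∈ X, a) D hfin
    ⟨H, hH, lep_refl H⟩
  simp only [hD, Set.mem_setOf_eq] at hH'
  refine ⟨H', ⟨hH'.1, fun H'' h2 hlep => ?_⟩, hH'.2⟩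
  have hmem : H'' ∈ D := ⟨h2, lep_trans hH'.2 hlep⟩
  exact eq_of_lep_of_sum hlep (le_antisymm (lep_sum_le hlep) (hmax hmem (lep_sum_le hlep)))

lemma y_mono {y : ℕ → ℕ} {k : ℕ}
    (hgap : ∀ j, 1 ≤ j → j < k → y j + 2 ≤ y (j + 1)) :
    ∀ a b, 1 ≤ a → a ≤ b → b ≤ k → y a ≤ y b := by
  intro a b ha hab hbk
  induction b with
  | zero => omega
  | succ m ih =>
    rcases Nat.eq_or_lt_of_le hab with rfl | h
    · exact le_refl _
    · have h1 := ih (by omega) (by omega)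
      have h2 := hgap m (by omega) (by omega)
      omega

lemma y_mem {y : ℕ → ℕ} {k j : ℕ} (h1 : 1 ≤ j) (h2 : j ≤ k) :
    y j ∈ (Finset.Icc 1 k).biUnion (fun j => {y j, y j + 1}) := by
  rw [Finset.mem_biUnion]
  exact ⟨j, Finset.mem_Icc.mpr ⟨h1, h2⟩, Finset.mem_insert_self _ _⟩

lemma FF_bounds {k n : ℕ} {X : Finset ℕ} (hX : X ∈ FF k n) :
    ∀ a ∈ X, 1 ≤ a ∧ a ≤ n := by
  obtain ⟨y, hy1, hyn, hgap, hXe⟩ := hX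
  intro a ha
  rw [hXe, Finset.mem_biUnion] at ha
  obtain ⟨j, hj, haj⟩ := ha
  rw [Finset.mem_Icc] at hj
  have hm := y_mono hgap 1 j (by omega) hj.1 hj.2
  have hn := hyn j hj.1 hj.2
  simp only [Finset.mem_insert, Finset.mem_singleton] at haj
  omega

lemma FF_sub {k n : ℕ} {X : Finset ℕ} (hk : 1 ≤ k) (hX : X ∈ FF k n) (h2 : ∀ a ∈ X, 2 ≤ a) :
    X.image (· - 1) ∈ FF k n := by
  obtain ⟨y, hy1, hyn, hgap, hXe⟩ := hX
  have hyj : ∀ j, 1 ≤ j → j ≤ k → 2 ≤ y j := by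
    intro j ha hb
    exact h2 _ (by rw [hXe]; exact y_mem ha hb)
  refine ⟨fun j => y j - 1, ?_, ?_, ?_, ?_⟩
  · dsimp only; have := hyj 1 le_rfl hk; omega
  · intro j ha hb; dsimp only; have := hyn j ha hb; have := hyj j ha hb; omega
  · intro j ha hb
    dsimp only
    have := hgap j ha hb
    have := hyj j ha (by omega)
    omega
  · rw [hXe, Finset.biUnion_image]
    apply Finset.biUnion_congr rfl
    intro j hj
    rw [Finset.mem_Icc] at hj
    have := hyj j hj.1 hj.2
    rw [Finset.image_insert, Finset.image_singleton]
    ext a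
    simp only [Finset.mem_insert, Finset.mem_singleton]
    omega

lemma FF_add {k n : ℕ} {X : Finset ℕ} (hX : X ∈ FF k n) (h2 : ∀ a ∈ X, a + 1 ≤ n) :
    X.image (· + 1) ∈ FF k n := by
  obtain ⟨y, hy1, hyn, hgap, hXe⟩ := hX
  have hyj : ∀ j, 1 ≤ j → j ≤ k → y j + 2 ≤ n := by
    intro j ha hb
    have : y j + 1 ∈ X := by
      rw [hXe, Finset.mem_biUnion]
      exact ⟨j, Finset.mem_Icc.mpr ⟨ha, hb⟩, by simp⟩
    have := h2 _ this; omega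
  refine ⟨fun j => y j + 1, ?_, ?_, ?_, ?_⟩
  · dsimp only; omega
  · intro j ha hb; dsimp only; have := hyj j ha hb; omega
  · intro j ha hb; dsimp only; have := hgap j ha hb; omega
  · rw [hXe, Finset.biUnion_image]
    apply Finset.biUnion_congr rfl
    intro j hj
    rw [Finset.image_insert, Finset.image_singleton]

lemma FF_first_pair {k n i : ℕ} {H : Finset ℕ} (hk : 1 ≤ k) (hi : 1 ≤ i)
    (hH : ∀ a ∈ H, i + 3 ≤ a)
    (hX : (Finset.Icc (i+1) (i+2) ∪ H) ∈ FF k n) :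
    (Finset.Icc i (i+1) ∪ H) ∈ FF k n := by
  obtain ⟨y, hy1, hyn, hgap, hXe⟩ := hX
  -- y 1 = i + 1
  have hy1e : y 1 = i + 1 := by
    have h1 : y 1 ∈ Finset.Icc (i+1) (i+2) ∪ H := by rw [hXe]; exact y_mem le_rfl hk
    have h2 : (i+1 : ℕ) ∈ Finset.Icc (i+1) (i+2) ∪ H := by
      rw [Finset.mem_union, Finset.mem_Icc]; left; omega
    rw [hXe, Finset.mem_biUnion] at h2
    obtain ⟨j, hj, hj2⟩ := h2
    rw [Finset.mem_Icc] at hj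
    simp only [Finset.mem_insert, Finset.mem_singleton] at hj2
    have hm := y_mono hgap 1 j (by omega) hj.1 hj.2
    rw [Finset.mem_union, Finset.mem_Icc] at h1
    rcases h1 with h1 | h1
    · omega
    · have := hH _ h1; omega
  -- the tail
  set R := (Finset.Icc 2 k).biUnion (fun j => {y j, y j + 1}) with hR
  have hsplit : (Finset.Icc 1 k).biUnion (fun j : ℕ => ({y j, y j + 1} : Finset ℕ))
      = {y 1, y 1 + 1} ∪ R := by
    rw [hR, show Finset.Icc 1 k = insert 1 (Finset.Icc 2 k) by
      ext a; rw [Finset.mem_insert, Finset.mem_Icc, Finset.mem_Icc]; omega]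
    rw [Finset.biUnion_insert]
  have hRge : ∀ a ∈ R, i + 3 ≤ a := by
    intro a ha
    rw [hR, Finset.mem_biUnion] at ha
    obtain ⟨j, hj, hja⟩ := ha
    rw [Finset.mem_Icc] at hj
    have hg : y 1 + 2 ≤ y 2 := by
      have := hgap 1 le_rfl (by omega); norm_num at this; exact this
    have hm2 := y_mono hgap 2 j (by omega) hj.1 hj.2
    simp only [Finset.mem_insert, Finset.mem_singleton] at hja
    omega
  have hXe' : Finset.Icc (i+1) (i+2) ∪ H = {i+1, i+2} ∪ R := by
    rw [hXe, hsplit, hy1e]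
  have hRH : R = H := by
    ext a
    constructor
    · intro ha
      have h3 := hRge a ha
      have : a ∈ Finset.Icc (i+1) (i+2) ∪ H := by
        rw [hXe']; exact Finset.mem_union_right _ ha
      rw [Finset.mem_union, Finset.mem_Icc] at this
      rcases this with h | h
      · omega
      · exact h
    · intro ha
      have h3 := hH a ha
      have : a ∈ ({i+1, i+2} : Finset ℕ) ∪ R := by
        rw [← hXe']; exact Finset.mem_union_right _ ha
      rw [Finset.mem_union, Finset.mem_insert, Finset.mem_singleton] at this
      rcases this with h | h
      · omega
      · exact h
  have hg2 : 1 < k → y 1 + 2 ≤ y 2 := by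
    intro h
    have := hgap 1 le_rfl h; norm_num at this; exact this
  refine ⟨fun j => if j = 1 then i else y j, by simp [hi], ?_, ?_, ?_⟩
  · intro j ha hb
    by_cases hj1 : j = 1
    · subst hj1; dsimp only; rw [if_pos rfl]
      have := hyn 1 le_rfl hb; omega
    · simp only [if_neg hj1]; exact hyn j ha hb
  · intro j ha hb
    by_cases hj1 : j = 1
    · subst hj1
      have h2 : (1 + 1 : ℕ) ≠ 1 := by omega
      dsimp only
      rw [if_pos rfl, if_neg h2]
      have := hg2 hb
      norm_num
      omega
    · have h2 : j + 1 ≠ 1 := by omega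
      simp only [if_neg hj1, if_neg h2]
      exact hgap j ha hb
  · rw [show Finset.Icc 1 k = insert 1 (Finset.Icc 2 k) by
      ext a; rw [Finset.mem_insert, Finset.mem_Icc, Finset.mem_Icc]; omega]
    rw [Finset.biUnion_insert]
    have : (Finset.Icc 2 k).biUnion
        (fun j : ℕ => ({(if j = 1 then i else y j), (if j = 1 then i else y j) + 1} : Finset ℕ)) = R := by
      rw [hR]
      apply Finset.biUnion_congr rfl
      intro j hj
      rw [Finset.mem_Icc] at hj
      have : j ≠ 1 := by omega
      simp [this]
    rw [this, hRH]
    dsimp only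
    rw [if_pos rfl]
    ext a
    simp only [Finset.mem_union, Finset.mem_Icc, Finset.mem_insert, Finset.mem_singleton]
    by_cases hA : a ∈ H <;> simp [hA] <;> omega

lemma SJcand_def {k n j : ℕ} {S : Set (Finset ℕ)} {H : Finset ℕ} :
    H ∈ SJcand k n S j 1 ↔
      (∀ a ∈ H, j + 2 ≤ a ∧ a ≤ n) ∧
        ((Finset.Icc j (j+1) ∪ H) ∈ FF k n ∧ ∃ F ∈ S, lep (Finset.Icc j (j+1) ∪ H) F) := by
  have e1 : j + 2 * 1 = j + 2 := by omega
  have e2 : j + 2 * 1 - 1 = j + 1 := by omega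
  unfold SJcand idealOf
  rw [Set.mem_setOf_eq, e1, e2]
  rfl

lemma monotone_sub1 : Monotone (fun a : ℕ => a - 1) := fun a b h => Nat.sub_le_sub_right h 1

lemma monotone_add1 : Monotone (fun a : ℕ => a + 1) := fun a b h => by dsimp only; omega

lemma injOn_sub1 {X : Finset ℕ} (h : ∀ a ∈ X, 1 ≤ a) : Set.InjOn (fun a : ℕ => a - 1) X := by
  intro a ha b hb hab
  have := h a ha; have := h b hb
  simp only at hab
  omega

lemma injOn_add1 {X : Finset ℕ} : Set.InjOn (fun a : ℕ => a + 1) X := by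
  intro a _ b _ hab; simp only at hab; omega

lemma image_add_sub (F : Finset ℕ) : (F.image (fun a => a + 1)).image (fun a => a - 1) = F := by
  rw [Finset.image_image]
  rw [show F = F.image id from (Finset.image_id).symm]
  rw [Finset.image_image]
  apply Finset.image_congr
  intro a _; simp

lemma lep_ge_of_ge {X F : Finset ℕ} (h : lep X F) (hne : X.Nonempty) {m : ℕ}
    (hm : ∀ a ∈ X, m ≤ a) : ∀ b ∈ F, m ≤ b := by
  intro b hb
  have h0 : 0 < X.card := Finset.card_pos.mpr hne
  have h1 : m ≤ (X.sort (· ≤ ·)).getD 0 0 := hm _ (sort_getD_mem h0)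
  exact le_trans (le_trans h1 (h.2 0)) (getD_zero_le hb)

lemma lep_le_of_le {X F : Finset ℕ} (h : lep X F) {n : ℕ}
    (hn : ∀ b ∈ F, b ≤ n) : ∀ a ∈ X, a ≤ n := by
  intro a ha
  obtain ⟨ℓ, hℓ, he⟩ := mem_eq_getD ha
  have h2 : (F.sort (· ≤ ·)).getD ℓ 0 ∈ F := sort_getD_mem (h.1 ▸ hℓ)
  have := h.2 ℓ
  have := hn _ h2
  omega

lemma lep_pair_union {i : ℕ} {H : Finset ℕ} (hH : ∀ a ∈ H, i + 3 ≤ a) :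
    lep (Finset.Icc i (i+1) ∪ H) (Finset.Icc (i+1) (i+2) ∪ H) := by
  have s1 := sort_pair_union (j := i) (H := H) (fun a ha => by have := hH a ha; omega)
  have s2 := sort_pair_union (j := i+1) (H := H) (fun a ha => by have := hH a ha; omega)
  constructor
  · rw [← Finset.length_sort (α := ℕ) (· ≤ ·), ← Finset.length_sort (α := ℕ) (· ≤ ·),
      s1, show i+1+1 = i+2 from by omega, s2]
    simp
  · intro ℓ
    rw [s1, show i+1+1 = i+2 from by omega, s2]
    match ℓ with
    | 0 => simp
    | 1 => simp
    | (m+2) => simp [List.getD_cons_succ]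

lemma pair_image_sub {i : ℕ} (hi : 1 ≤ i) :
    (Finset.Icc (i+1) (i+2)).image (fun a => a - 1) = Finset.Icc i (i+1) := by
  ext a
  simp only [Finset.mem_image, Finset.mem_Icc]
  constructor
  · rintro ⟨b, hb, rfl⟩; omega
  · intro ha; exact ⟨a + 1, by omega, by omega⟩

lemma pair_image_add {i : ℕ} :
    (Finset.Icc i (i+1)).image (fun a => a + 1) = Finset.Icc (i+1) (i+2) := by
  ext a
  simp only [Finset.mem_image, Finset.mem_Icc]
  constructor
  · rintro ⟨b, hb, rfl⟩; omega
  · intro ha; exact ⟨a - 1, by omega, by omega⟩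

lemma cand_shift {k n i : ℕ} {S : Set (Finset ℕ)} (hk : 1 ≤ k) (hi : 1 ≤ i)
    {H : Finset ℕ} (hH : H ∈ SJcand k n S (i+1) 1) : H ∈ SJcand k n S i 1 := by
  rw [SJcand_def] at hH ⊢
  rw [show i + 1 + 1 = i + 2 from by omega] at hH
  obtain ⟨hb, hXFF, F, hFS, hlep⟩ := hH
  have hH3 : ∀ a ∈ H, i + 3 ≤ a := fun a ha => by have := (hb a ha).1; omega
  refine ⟨fun a ha => ⟨by have := (hb a ha).1; omega, (hb a ha).2⟩,
    FF_first_pair hk hi hH3 hXFF, F, hFS, lep_trans (lep_pair_union hH3) hlep⟩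

lemma cand_down {k n i : ℕ} {S : Set (Finset ℕ)} (hk : 1 ≤ k) (hi : 1 ≤ i)
    {H : Finset ℕ} (hH : H ∈ SJcand k n S (i+1) 1) :
    H.image (fun a => a - 1) ∈ SJcand k n (sub1 S) i 1 := by
  rw [SJcand_def] at hH ⊢
  rw [show i + 1 + 1 = i + 2 from by omega] at hH
  obtain ⟨hb, hXFF, F, hFS, hlep⟩ := hH
  set X := Finset.Icc (i+1) (i+2) ∪ H with hX
  have hXmin : ∀ a ∈ X, 2 ≤ a := by
    intro a ha
    rw [hX, Finset.mem_union, Finset.mem_Icc] at ha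
    rcases ha with h | h
    · omega
    · have := (hb a h).1; omega
  have hXne : X.Nonempty := ⟨i+1, by rw [hX, Finset.mem_union, Finset.mem_Icc]; left; omega⟩
  have hFmin : ∀ b ∈ F, 2 ≤ b := lep_ge_of_ge hlep hXne hXmin
  have hXim : X.image (fun a => a - 1) = Finset.Icc i (i+1) ∪ H.image (fun a => a - 1) := by
    rw [hX, Finset.image_union, pair_image_sub hi]
  refine ⟨?_, ?_, ?_⟩
  · intro a ha
    rw [Finset.mem_image] at ha
    obtain ⟨b, hbH, rfl⟩ := ha
    have := hb b hbH; omega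
  · rw [← hXim]
    exact FF_sub hk hXFF hXmin
  · refine ⟨F.image (fun a => a - 1), ⟨F, hFS, hFmin, rfl⟩, ?_⟩
    rw [← hXim]
    exact lep_image monotone_sub1 (injOn_sub1 (fun a ha => by have := hXmin a ha; omega))
      (injOn_sub1 (fun a ha => by have := hFmin a ha; omega)) hlep

lemma FF_nonempty {k n : ℕ} {F : Finset ℕ} (hk : 1 ≤ k) (hF : F ∈ FF k n) : F.Nonempty := by
  obtain ⟨y, hy1, hyn, hgap, hFe⟩ := hF
  exact ⟨y 1, by rw [hFe]; exact y_mem le_rfl hk⟩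

lemma cand_up {k n i : ℕ} {S : Set (Finset ℕ)} (hk : 1 ≤ k) (hi : 1 ≤ i)
    (hSF : S ⊆ FF k n) {G : Finset ℕ}
    (hG : G ∈ SJcand k n (sub1 S) i 1) :
    G.image (fun a => a + 1) ∈ SJcand k n S (i+1) 1 := by
  rw [SJcand_def] at hG ⊢
  rw [show i + 1 + 1 = i + 2 from by omega]
  obtain ⟨hb, hXFF, F', hF'S, hlep⟩ := hG
  obtain ⟨F, hFS, hF2, rfl⟩ := hF'S
  have hFF := hSF hFS
  have hFbd := FF_bounds hFF
  have hFne := FF_nonempty hk hFF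
  obtain ⟨c, hc⟩ := hFne
  have hn2 : 2 ≤ n := by have := hFbd c hc; have := hF2 c hc; omega
  have hF'bd : ∀ b ∈ F.image (fun a => a - 1), b ≤ n - 1 := by
    intro b hbm
    rw [Finset.mem_image] at hbm
    obtain ⟨a, ha, rfl⟩ := hbm
    have := hFbd a ha; have := hF2 a ha; omega
  set X := Finset.Icc i (i+1) ∪ G with hX
  have hXbd : ∀ a ∈ X, a ≤ n - 1 := lep_le_of_le hlep hF'bd
  have hXbd' : ∀ a ∈ X, a + 1 ≤ n := fun a ha => by have := hXbd a ha; omega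
  have hXim : X.image (fun a => a + 1) = Finset.Icc (i+1) (i+2) ∪ G.image (fun a => a + 1) := by
    rw [hX, Finset.image_union, pair_image_add]
  refine ⟨?_, ?_, ?_⟩
  · intro a ha
    rw [Finset.mem_image] at ha
    obtain ⟨b, hbG, rfl⟩ := ha
    have h1 := hb b hbG
    have h2 := hXbd b (by rw [hX, Finset.mem_union]; right; exact hbG)
    omega
  · rw [← hXim]
    exact FF_add hXFF hXbd'
  · refine ⟨F, hFS, ?_⟩
    have h1 : lep (X.image (fun a => a + 1)) ((F.image (fun a => a - 1)).image (fun a => a + 1)) :=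
      lep_image monotone_add1 injOn_add1 injOn_add1 hlep
    rw [image_sub_add (fun a ha => by have := hF2 a ha; omega)] at h1
    rw [← hXim]
    exact h1


/-- `S([i+1, i+2]) ≤_p S([i, i+1])`, and
`(S − 1_{2k})([i, i+1]) = S([i+1, i+2]) − 1_{2k-2}`. -/
theorem SJ_shift (k n i : ℕ) (hk : 1 ≤ k) (hi : 1 ≤ i)
    (S : Set (Finset ℕ)) (hS : IsAC k n S) :
    ACle (SJ k n S (i + 1) 1) (SJ k n S i 1) ∧
      SJ k n (sub1 S) i 1 = sub1 (SJ k n S (i + 1) 1) := by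
  have hbd : ∀ j, ∀ H ∈ SJcand k n S j 1, ∀ a ∈ H, a ≤ n := by
    intro j H hH a ha
    exact ((SJcand_def.mp hH).1 a ha).2
  constructor
  · -- Part 1
    intro H hH
    have hc : H ∈ SJcand k n S i 1 := cand_shift hk hi hH.1
    obtain ⟨H', hH', hlep⟩ := exists_lep_max (hbd i) hc
    exact ⟨H', hH', hlep⟩
  · -- Part 2
    ext G
    constructor
    · -- ⊆
      intro hG
      obtain ⟨hGc, hGmax⟩ := hG
      set H := G.image (fun a => a + 1) with hHdef
      have hGbd : ∀ a ∈ G, i + 2 ≤ a ∧ a ≤ n := (SJcand_def.mp hGc).1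
      have hGH : G = H.image (fun a => a - 1) := (image_add_sub G).symm
      have hHc : H ∈ SJcand k n S (i+1) 1 := cand_up hk hi hS.1 hGc
      have hHbd : ∀ a ∈ H, i + 3 ≤ a := by
        intro a ha
        have := (SJcand_def.mp hHc).1 a ha; omega
      refine ⟨H, ⟨hHc, ?_⟩, fun a ha => by have := hHbd a ha; omega, hGH⟩
      intro H' hH' hlep
      have hH'bd : ∀ a ∈ H', i + 3 ≤ a := by
        intro a ha
        have := (SJcand_def.mp hH').1 a ha; omega
      have hG'c := cand_down hk hi hH'
      have hlep' : lep G (H'.image (fun a => a - 1)) := by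
        rw [hGH]
        exact lep_image monotone_sub1 (injOn_sub1 (fun a ha => by have := hHbd a ha; omega))
          (injOn_sub1 (fun a ha => by have := hH'bd a ha; omega)) hlep
      have hGe := hGmax _ hG'c hlep'
      calc H = G.image (fun a => a + 1) := hHdef
        _ = ((H'.image (fun a => a - 1)).image (fun a => a + 1)) := by rw [hGe]
        _ = H' := image_sub_add (fun a ha => by have := hH'bd a ha; omega)
    · -- ⊇
      rintro ⟨H, hHSJ, hH2, rfl⟩
      obtain ⟨hHc, hHmax⟩ := hHSJ
      have hHbd : ∀ a ∈ H, i + 3 ≤ a := by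
        intro a ha
        have := (SJcand_def.mp hHc).1 a ha; omega
      have hGc : H.image (fun a => a - 1) ∈ SJcand k n (sub1 S) i 1 := cand_down hk hi hHc
      refine ⟨hGc, ?_⟩
      intro G' hG' hlep
      have hH'c := cand_up hk hi hS.1 hG'
      have hHG : (H.image (fun a => a - 1)).image (fun a => a + 1) = H :=
        image_sub_add (fun a ha => by have := hHbd a ha; omega)
      have hlep' : lep H (G'.image (fun a => a + 1)) := by
        rw [← hHG]
        exact lep_image monotone_add1 injOn_add1 injOn_add1 hlep
      have hHe := hHmax _ hH'c hlep'
      rw [hHe, image_add_sub]
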